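/- Let d ∈ ℕ and define the Chebyshev intrinsic weights u_ν = 2^{‖ν‖₀/2} for ν ∈ ℕ₀^d, where ‖ν‖₀ = |{k : ν_k ≠ 0}|. For s ∈ ℕ, let k(s) = max{ |S|_u : S ⊂ ℕ₀^d lower, |S| ≤ s }, where |S|_u = ∑_{ν∈S} u_ν². Then k(s) ≤ min{ 2^d s, s^{log 3 / log 2} }. -/

import Mathlib

open Finset

noncomputable def chebBeta : ℝ := Real.log 3 / Real.log 2

lemma chebBeta_one_le : 1 ≤ chebBeta := by
  rw [chebBeta, le_div_iff₀ (Real.log_pos (by norm_num)), one_mul]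
  exact Real.log_le_log (by norm_num) (by norm_num)

lemma chebBeta_pos : 0 < chebBeta := lt_of_lt_of_le one_pos chebBeta_one_le

lemma two_rpow_chebBeta : (2 : ℝ) ^ chebBeta = 3 := by
  rw [chebBeta, Real.rpow_def_of_pos (by norm_num : (0:ℝ) < 2), mul_comm,
    div_mul_cancel₀ _ (Real.log_pos (by norm_num : (1:ℝ) < 2)).ne',
    Real.exp_log (by norm_num)]

lemma half_rpow_chebBeta : ((1:ℝ)/2) ^ chebBeta = 1/3 := by
  rw [one_div, one_div, Real.inv_rpow (by norm_num), two_rpow_chebBeta]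

lemma keyA {x y : ℝ} (hy : 0 ≤ y) (hyx : y ≤ x) :
    x ^ chebBeta + 2 * y ^ chebBeta ≤ (x + y) ^ chebBeta := by
  rcases eq_or_lt_of_le (hy.trans hyx) with hx0 | hx0
  · rw [← hx0] at hyx
    have hy0 : y = 0 := le_antisymm hyx hy
    simp [← hx0, hy0, Real.zero_rpow chebBeta_pos.ne']
  · have hT : 0 < x + y := by linarith
    set l : ℝ := 2 * y / (x + y) with hl_def
    have hl0 : 0 ≤ l := by positivity
    have hl1 : l ≤ 1 := by
      rw [hl_def, div_le_one hT]; linarith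
    have hconv := convexOn_rpow chebBeta_one_le
    have h1 : (x / (x + y)) ^ chebBeta ≤ (1 - l) * 1 + l * (1/3) := by
      have := hconv.2 (Set.mem_Ici.2 (by norm_num : (0:ℝ) ≤ 1))
        (Set.mem_Ici.2 (by norm_num : (0:ℝ) ≤ 1/2)) (by linarith : (0:ℝ) ≤ 1 - l) hl0
        (by ring)
      have harg : (1 - l) • (1:ℝ) + l • ((1:ℝ)/2) = x / (x + y) := by
        rw [smul_eq_mul, smul_eq_mul, hl_def]
        field_simp
        ring
      rw [harg] at this
      have h12 : ((2:ℝ)⁻¹) ^ chebBeta = 3⁻¹ := by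
        rw [Real.inv_rpow (by norm_num), two_rpow_chebBeta]
      simpa [smul_eq_mul, Real.one_rpow, h12] using this
    have h2 : (y / (x + y)) ^ chebBeta ≤ l * (1/3) := by
      have := hconv.2 (Set.mem_Ici.2 (by norm_num : (0:ℝ) ≤ 1/2))
        (Set.mem_Ici.2 (le_refl (0:ℝ))) hl0 (by linarith : (0:ℝ) ≤ 1 - l)
        (by ring)
      have harg : l • ((1:ℝ)/2) + (1 - l) • (0:ℝ) = y / (x + y) := by
        rw [smul_eq_mul, smul_eq_mul, hl_def]
        field_simp
        ring
      rw [harg] at this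
      have h12 : ((2:ℝ)⁻¹) ^ chebBeta = 3⁻¹ := by
        rw [Real.inv_rpow (by norm_num), two_rpow_chebBeta]
      simpa [smul_eq_mul, h12, Real.zero_rpow chebBeta_pos.ne'] using this
    have hsum : (x / (x + y)) ^ chebBeta + 2 * (y / (x + y)) ^ chebBeta ≤ 1 := by
      have : (1 - l) * 1 + l * (1/3) + 2 * (l * (1/3)) = 1 := by ring
      nlinarith [h1, h2]
    have hx' : x ^ chebBeta / (x + y) ^ chebBeta + 2 * (y ^ chebBeta / (x + y) ^ chebBeta) ≤ 1 := by
      rw [← Real.div_rpow (by linarith) hT.le, ← Real.div_rpow hy hT.le]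
      exact hsum
    have hTpow : 0 < (x + y) ^ chebBeta := Real.rpow_pos_of_pos hT _
    rw [show x ^ chebBeta / (x + y) ^ chebBeta + 2 * (y ^ chebBeta / (x + y) ^ chebBeta)
        = (x ^ chebBeta + 2 * y ^ chebBeta) / (x + y) ^ chebBeta from by ring,
      div_le_one hTpow] at hx'
    linarith [hx']

lemma iterA {ι : Type*} (T : Finset ι) (b : ι → ℝ) (a : ℝ) (ha : 0 ≤ a)
    (hb : ∀ i ∈ T, 0 ≤ b i) (hba : ∀ i ∈ T, b i ≤ a) :
    a ^ chebBeta + 2 * ∑ i ∈ T, (b i) ^ chebBeta ≤ (a + ∑ i ∈ T, b i) ^ chebBeta := by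
  classical
  induction T using Finset.induction_on with
  | empty => simp
  | insert _ _ hnot =>
    rename_i i T' ih
    have hb' : ∀ j ∈ T', 0 ≤ b j := fun j hj => hb j (mem_insert_of_mem hj)
    have hba' : ∀ j ∈ T', b j ≤ a := fun j hj => hba j (mem_insert_of_mem hj)
    have hsum0 : 0 ≤ ∑ j ∈ T', b j := sum_nonneg hb'
    have hbi : b i ≤ a + ∑ j ∈ T', b j := le_add_of_le_of_nonneg
      (hba i (mem_insert_self i T')) hsum0
    have := keyA (hb i (mem_insert_self i T')) hbi
    rw [sum_insert hnot, sum_insert hnot]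
    calc a ^ chebBeta + 2 * ((b i) ^ chebBeta + ∑ j ∈ T', (b j) ^ chebBeta)
        = (a ^ chebBeta + 2 * ∑ j ∈ T', (b j) ^ chebBeta) + 2 * (b i) ^ chebBeta := by ring
      _ ≤ (a + ∑ j ∈ T', b j) ^ chebBeta + 2 * (b i) ^ chebBeta := by
          linarith [ih hb' hba']
      _ ≤ (a + ∑ j ∈ T', b j + b i) ^ chebBeta := this
      _ = (a + (b i + ∑ j ∈ T', b j)) ^ chebBeta := by ring_nf

lemma supp_succ {d : ℕ} (ν : Fin (d+1) → ℕ) :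
    (2:ℝ) ^ (Finset.univ.filter (fun k => ν k ≠ 0)).card
      = (if ν 0 = 0 then 1 else 2) *
        (2:ℝ) ^ (Finset.univ.filter (fun k => Fin.tail ν k ≠ 0)).card := by
  have h : (Finset.univ.filter (fun k : Fin (d+1) => ν k ≠ 0)).card
      = (if ν 0 = 0 then 0 else 1)
        + (Finset.univ.filter (fun k : Fin d => Fin.tail ν k ≠ 0)).card := by
    rw [Finset.card_filter, Finset.card_filter, Fin.sum_univ_succ]
    congr 1
    · split <;> simp_all
  rw [h, pow_add]
  split <;> simp

lemma mainLemma : ∀ (d : ℕ) (S : Finset (Fin d → ℕ)),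
    (∀ ν ∈ S, ∀ μ : Fin d → ℕ, μ ≤ ν → μ ∈ S) →
    (∑ ν ∈ S, (2 : ℝ) ^ (Finset.univ.filter (fun k => ν k ≠ 0)).card)
      ≤ (S.card : ℝ) ^ chebBeta := by
  intro d
  induction d with
  | zero =>
    intro S _
    have h1 : S.card ≤ 1 := Finset.card_le_one.2 (fun a _ b _ => funext fun i => i.elim0)
    have hterm : ∀ ν ∈ S, (2:ℝ) ^ (Finset.univ.filter (fun k => ν k ≠ 0)).card = 1 := by
      intro ν _
      simp [Finset.univ_eq_empty]
    rw [Finset.sum_congr rfl hterm, Finset.sum_const, nsmul_eq_mul, mul_one]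
    rcases Nat.le_one_iff_eq_zero_or_eq_one.mp h1 with h | h <;> rw [h]
    · rw [Nat.cast_zero, Real.zero_rpow chebBeta_pos.ne']
    · rw [Nat.cast_one, Real.one_rpow]
  | succ d ih =>
    intro S hlower
    rcases S.eq_empty_or_nonempty with rfl | hS
    · simp [Real.zero_rpow chebBeta_pos.ne']
    classical
    set n := S.sup (fun ν => ν 0) with hn
    have hmap : ∀ ν ∈ S, ν 0 ∈ Finset.range (n+1) := fun ν hν =>
      Finset.mem_range.2 (Nat.lt_succ_of_le (Finset.le_sup (f := fun ν => ν 0) hν))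
    set Tj : ℕ → Finset (Fin d → ℕ) :=
      fun j => (S.filter (fun ν => ν 0 = j)).image Fin.tail with hTj
    have hinj : ∀ j : ℕ, ∀ ν₁ ∈ S.filter (fun ν => ν 0 = j),
        ∀ ν₂ ∈ S.filter (fun ν => ν 0 = j), Fin.tail ν₁ = Fin.tail ν₂ → ν₁ = ν₂ := by
      intro j ν₁ h₁ ν₂ h₂ ht
      rw [Finset.mem_filter] at h₁ h₂
      rw [← Fin.cons_self_tail ν₁, ← Fin.cons_self_tail ν₂, h₁.2, h₂.2, ht]
    have hcardTj : ∀ j, (Tj j).card = (S.filter (fun ν => ν 0 = j)).card := fun j =>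
      Finset.card_image_of_injOn (hinj j)
    have hlowTj : ∀ j, ∀ ν ∈ Tj j, ∀ μ, μ ≤ ν → μ ∈ Tj j := by
      intro j ν hν μ hμν
      rw [hTj, Finset.mem_image] at hν
      obtain ⟨ν', hν', hteq⟩ := hν
      rw [Finset.mem_filter] at hν'
      have hle : Fin.cons j μ ≤ ν' := by
        intro k
        refine Fin.cases ?_ ?_ k
        · rw [Fin.cons_zero, hν'.2]
        · intro i
          rw [Fin.cons_succ]
          calc μ i ≤ ν i := hμν i
            _ = ν' i.succ := by rw [← hteq]; rfl
      have hmem : Fin.cons j μ ∈ S := hlower ν' hν'.1 _ hle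
      rw [hTj, Finset.mem_image]
      exact ⟨Fin.cons j μ, Finset.mem_filter.2 ⟨hmem, Fin.cons_zero _ _⟩, Fin.tail_cons _ _⟩
    have hsub0 : ∀ j, Tj j ⊆ Tj 0 := by
      intro j μ hμ
      rw [hTj, Finset.mem_image] at hμ ⊢
      obtain ⟨ν', hν', hteq⟩ := hμ
      rw [Finset.mem_filter] at hν'
      have hle : Fin.cons 0 μ ≤ ν' := by
        intro k
        refine Fin.cases ?_ ?_ k
        · rw [Fin.cons_zero]; exact Nat.zero_le _
        · intro i
          rw [Fin.cons_succ]
          calc μ i = ν' i.succ := by rw [← hteq]; rfl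
            _ ≤ ν' i.succ := le_refl _
      have hmem : Fin.cons 0 μ ∈ S := hlower ν' hν'.1 _ hle
      exact ⟨Fin.cons 0 μ, Finset.mem_filter.2 ⟨hmem, Fin.cons_zero _ _⟩, Fin.tail_cons _ _⟩
    set W : ℕ → ℝ :=
      fun j => ∑ μ ∈ Tj j, (2:ℝ) ^ (Finset.univ.filter (fun k => μ k ≠ 0)).card with hW
    have hWnonneg : ∀ j, 0 ≤ W j := fun j => Finset.sum_nonneg (fun μ _ => by positivity)
    have hWsum : ∀ j, (∑ ν ∈ S.filter (fun ν => ν 0 = j),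
        (2:ℝ) ^ (Finset.univ.filter (fun k => ν k ≠ 0)).card)
        = (if j = 0 then 1 else 2) * W j := by
      intro j
      rw [hW]
      simp only [hTj]
      rw [Finset.sum_image (hinj j), Finset.mul_sum]
      refine Finset.sum_congr rfl ?_
      intro ν hν
      rw [Finset.mem_filter] at hν
      rw [supp_succ ν, hν.2]
    have hdecomp : (∑ ν ∈ S, (2:ℝ) ^ (Finset.univ.filter (fun k => ν k ≠ 0)).card)
        = ∑ j ∈ Finset.range (n+1), (if j = 0 then 1 else 2) * W j := by
      rw [← Finset.sum_fiberwise_of_maps_to hmap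
        (fun ν => (2:ℝ) ^ (Finset.univ.filter (fun k => ν k ≠ 0)).card)]
      exact Finset.sum_congr rfl (fun j _ => hWsum j)
    set c : ℕ → ℝ := fun j => ((Tj j).card : ℝ) with hc
    have hcnonneg : ∀ j, 0 ≤ c j := fun j => Nat.cast_nonneg _
    have hcle : ∀ j, c j ≤ c 0 := fun j => Nat.cast_le.2 (Finset.card_le_card (hsub0 j))
    have hWle : ∀ j, W j ≤ (c j) ^ chebBeta := fun j => ih (Tj j) (hlowTj j)
    have hcards : (S.card : ℝ) = ∑ j ∈ Finset.range (n+1), c j := by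
      rw [Finset.card_eq_sum_card_fiberwise hmap, Nat.cast_sum]
      exact Finset.sum_congr rfl (fun j _ => by simp only [hc]; exact_mod_cast (hcardTj j).symm)
    calc (∑ ν ∈ S, (2:ℝ) ^ (Finset.univ.filter (fun k => ν k ≠ 0)).card)
        = ∑ j ∈ Finset.range (n+1), (if j = 0 then 1 else 2) * W j := hdecomp
      _ = W 0 + 2 * ∑ i ∈ Finset.range n, W (i+1) := by
          rw [Finset.sum_range_succ']
          simp only [Finset.mul_sum, Nat.add_eq_zero, one_ne_zero, and_false, if_false,
            if_true, eq_self_iff_true, one_mul]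
          ring
      _ ≤ (c 0) ^ chebBeta + 2 * ∑ i ∈ Finset.range n, (c (i+1)) ^ chebBeta := by
          refine add_le_add (hWle 0) (mul_le_mul_of_nonneg_left ?_ (by norm_num))
          exact Finset.sum_le_sum (fun i _ => hWle (i+1))
      _ ≤ (c 0 + ∑ i ∈ Finset.range n, c (i+1)) ^ chebBeta := by
          exact iterA (Finset.range n) (fun i => c (i+1)) (c 0) (hcnonneg 0)
            (fun i _ => hcnonneg (i+1)) (fun i _ => hcle (i+1))
      _ = (∑ j ∈ Finset.range (n+1), c j) ^ chebBeta := by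
          rw [Finset.sum_range_succ', add_comm]
      _ = (S.card : ℝ) ^ chebBeta := by rw [hcards]

/-- Chebyshev weighted cardinality bound: for any lower set `S` of multi-indices
with `|S| ≤ s`, the weighted cardinality `∑_{ν∈S} 2^{‖ν‖₀}` (Chebyshev intrinsic
weights `u_ν = 2^{‖ν‖₀/2}`) is at most `min{2^d s, s^{log 3 / log 2}}`. -/
theorem chebyshev_weighted_card_bound (d s : ℕ) (hd : 1 ≤ d) (hs : 1 ≤ s)
    (S : Finset (Fin d → ℕ))
    (hlower : ∀ ν ∈ S, ∀ μ : Fin d → ℕ, μ ≤ ν → μ ∈ S)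
    (hcard : S.card ≤ s) :
    (∑ ν ∈ S, (2 : ℝ) ^ (Finset.univ.filter (fun k => ν k ≠ 0)).card) ≤
      min ((2 : ℝ) ^ d * s) ((s : ℝ) ^ (Real.log 3 / Real.log 2)) := by
  refine le_min ?_ ?_
  · calc (∑ ν ∈ S, (2 : ℝ) ^ (Finset.univ.filter (fun k => ν k ≠ 0)).card)
        ≤ ∑ ν ∈ S, (2 : ℝ) ^ d := by
          refine Finset.sum_le_sum (fun ν _ => ?_)
          refine pow_le_pow_right₀ (by norm_num) ?_
          calc (Finset.univ.filter (fun k => ν k ≠ 0)).card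
              ≤ (Finset.univ : Finset (Fin d)).card := Finset.card_le_card (Finset.filter_subset _ _)
            _ = d := by simp
      _ = (S.card : ℝ) * 2 ^ d := by rw [Finset.sum_const, nsmul_eq_mul]
      _ ≤ (s : ℝ) * 2 ^ d := by
          refine mul_le_mul_of_nonneg_right (Nat.cast_le.2 hcard) (by positivity)
      _ = (2 : ℝ) ^ d * s := by ring
  · calc (∑ ν ∈ S, (2 : ℝ) ^ (Finset.univ.filter (fun k => ν k ≠ 0)).card)
        ≤ (S.card : ℝ) ^ chebBeta := mainLemma d S hlower
      _ ≤ (s : ℝ) ^ chebBeta :=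
          Real.rpow_le_rpow (Nat.cast_nonneg _) (Nat.cast_le.2 hcard) chebBeta_pos.le
      _ = (s : ℝ) ^ (Real.log 3 / Real.log 2) := rfl
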